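/- With B as defined via the cyclic shift (B(e_i) = π J^i ι on U ⊂ ℂⁿ), for all u, v, w ∈ U one has u ∧ v ∧ [B(u),B(v)](w) = 0 in Λ³U, i.e. [B(u),B(v)](w) always lies in the span of u and v. -/
import Mathlib


/-- Projection of `ℂⁿ` (with `n = m+1`) onto `U = span(e₁,…,e_{n-1})` along the last
basis vector `eₙ`: it kills the last coordinate. -/
def cyclicProj (m : ℕ) (v : Fin (m + 1) → ℂ) : Fin (m + 1) → ℂ :=
  fun k => if k = Fin.last m then 0 else v k

/-- The map `B : U → End(U)` determined by `B(e_i) = π ∘ Jⁱ ∘ ι` for `1 ≤ i ≤ n−1`,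
where `J` is the cyclic shift `J e_i = e_{i+1}` (indices mod `n`), `ι : U → ℂⁿ` the
inclusion and `π` the projection along `eₙ`; zero-based indices, so
`B(u)(w) = Σ_i u_i · π (J^{i+1} (ι w))`. -/
noncomputable def cyclicB (m : ℕ) (u : Fin (m + 1) → ℂ) (w : Fin (m + 1) → ℂ) :
    Fin (m + 1) → ℂ :=
  cyclicProj m (fun k => ∑ i : Fin (m + 1), u i * cyclicProj m w (k - (i + 1)))

lemma cyclicProj_last (m : ℕ) (x : Fin (m + 1) → ℂ) :
    cyclicProj m x (Fin.last m) = 0 := by simp [cyclicProj]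

lemma cyclicProj_eq_self (m : ℕ) (x : Fin (m + 1) → ℂ) (hx : x (Fin.last m) = 0) :
    cyclicProj m x = x := by
  funext t
  unfold cyclicProj
  split
  · next h => rw [h, hx]
  · rfl

lemma cyclicB_last (m : ℕ) (a x : Fin (m + 1) → ℂ) :
    cyclicB m a x (Fin.last m) = 0 := by
  unfold cyclicB; exact cyclicProj_last m _

lemma sub_succ_eq_last_iff (m : ℕ) (i k : Fin (m + 1)) :
    k - (i + 1) = Fin.last m ↔ i = k := by
  rw [sub_eq_iff_eq_add, add_comm i 1, ← add_assoc, Fin.last_add_one, zero_add, eq_comm]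

/-- For all `u, v, w ∈ U`, the vector `[B(u),B(v)](w)` lies in the span of `u` and
`v` (equivalently, `u ∧ v ∧ [B(u),B(v)](w) = 0` in `Λ³U`). -/
theorem cyclicB_commutator_mem_span (m : ℕ) (u v w : Fin (m + 1) → ℂ)
    (hu : u (Fin.last m) = 0) (hv : v (Fin.last m) = 0) (hw : w (Fin.last m) = 0) :
    cyclicB m u (cyclicB m v w) - cyclicB m v (cyclicB m u w) ∈
      Submodule.span ℂ ({u, v} : Set (Fin (m + 1) → ℂ)) := by
  have hB : ∀ (a x : Fin (m + 1) → ℂ), x (Fin.last m) = 0 → ∀ t,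
      cyclicB m a x t = if t = Fin.last m then 0 else ∑ i, a i * x (t - (i + 1)) := by
    intro a x hx t
    have hx' : ∀ s, (if s = Fin.last m then (0 : ℂ) else x s) = x s := by
      intro s; split
      · next h => rw [h, hx]
      · rfl
    simp only [cyclicB, cyclicProj, hx']
  have key : cyclicB m u (cyclicB m v w) - cyclicB m v (cyclicB m u w)
      = (∑ i, u i * w (Fin.last m - (i + 1))) • v
        - (∑ i, v i * w (Fin.last m - (i + 1))) • u := by
    funext k
    have expand : ∀ (a b : Fin (m + 1) → ℂ), a (Fin.last m) = 0 →
        cyclicB m a (cyclicB m b w) k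
          = (if k = Fin.last m then 0 else
              ∑ i, ∑ j, a i * (b j * w (k - (i + 1) - (j + 1))))
            - a k * ∑ j, b j * w (Fin.last m - (j + 1)) := by
      intro a b ha
      by_cases hk : k = Fin.last m
      · rw [hk, cyclicB_last, if_pos rfl, ha, zero_mul, sub_zero]
      · rw [hB a _ (cyclicB_last m b w) k, if_neg hk, if_neg hk]
        simp only [hB b w hw, sub_succ_eq_last_iff]
        have step : ∀ i : Fin (m + 1),
            a i * (if i = k then 0 else ∑ j, b j * w (k - (i + 1) - (j + 1)))
              = (∑ j, a i * (b j * w (k - (i + 1) - (j + 1))))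
                - (if i = k then a i * ∑ j, b j * w (k - (i + 1) - (j + 1)) else 0) := by
          intro i
          split
          · simp [Finset.mul_sum]
          · simp [Finset.mul_sum, mul_assoc]
        rw [Finset.sum_congr rfl (fun i _ => step i), Finset.sum_sub_distrib]
        congr 1
        rw [Finset.sum_ite_eq' Finset.univ k
          (fun i => a i * ∑ j, b j * w (k - (i + 1) - (j + 1)))]
        rw [if_pos (Finset.mem_univ k), (sub_succ_eq_last_iff m k k).mpr rfl]
    rw [Pi.sub_apply, expand u v hu, expand v u hv, Pi.sub_apply, Pi.smul_apply,
      Pi.smul_apply, smul_eq_mul, smul_eq_mul]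
    have hsym : (if k = Fin.last m then 0 else
          ∑ i, ∑ j, u i * (v j * w (k - (i + 1) - (j + 1))))
        = (if k = Fin.last m then 0 else
          ∑ i, ∑ j, v i * (u j * w (k - (i + 1) - (j + 1)))) := by
      congr 1
      rw [Finset.sum_comm]
      refine Finset.sum_congr rfl fun i _ => Finset.sum_congr rfl fun j _ => ?_
      rw [sub_right_comm]; ring
    rw [hsym]
    ring
  rw [key]
  exact sub_mem
    (Submodule.smul_mem _ _ (Submodule.subset_span (Set.mem_insert_of_mem _ rfl)))
    (Submodule.smul_mem _ _ (Submodule.subset_span (Set.mem_insert _ _)))
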